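/- For any w ∈ R^m, g ∈ R^m, ν ≥ 0 and δ ≥ 0, the unconstrained maximization max_w [−ν‖w − g‖₂ − δ‖w‖_∞] equals −min_{μ ≥ 0} [ν·√(Σᵢ S_μ(gᵢ)²) + δμ], where S_μ is the soft-threshold operator at level μ. -/
import Mathlib

open Real

noncomputable def norm2 {d : ℕ} (x : Fin d → ℝ) : ℝ := Real.sqrt (∑ i, (x i)^2)
noncomputable def normInf {d : ℕ} (x : Fin d → ℝ) : ℝ := ⨆ i, |x i|

/-- Soft thresholding at level `μ`. -/
noncomputable def softT (μ x : ℝ) : ℝ := Real.sign x * max (|x| - μ) 0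

lemma abs_softT (μ a : ℝ) (hμ : 0 ≤ μ) : |softT μ a| = max (|a| - μ) 0 := by
  rcases lt_trichotomy a 0 with h | h | h
  · rw [softT, Real.sign_of_neg h, abs_mul, abs_neg, abs_one, one_mul,
      abs_of_nonneg (le_max_right _ _)]
  · simp [softT, h, max_eq_right, neg_nonpos_of_nonneg hμ, abs_of_nonpos]
  · rw [softT, Real.sign_of_pos h, abs_mul, abs_one, one_mul,
      abs_of_nonneg (le_max_right _ _)]

lemma clamp_diff (μ a : ℝ) (hμ : 0 ≤ μ) :
    |max (min a μ) (-μ) - a| = max (|a| - μ) 0 := by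
  rcases le_total a (-μ) with h | h
  · rw [min_eq_left (h.trans (by linarith)), max_eq_right h,
      abs_of_nonneg (by linarith), abs_of_nonpos (by linarith)]
    rw [max_eq_left (by linarith)]; ring
  · rcases le_total a μ with h2 | h2
    · rw [min_eq_left h2, max_eq_left h, sub_self, abs_zero,
        max_eq_right (by cases abs_cases a with
          | inl hc => linarith [hc.1]
          | inr hc => linarith [hc.1])]
    · rw [min_eq_right h2, max_eq_left (by linarith), abs_of_nonpos (by linarith),
        abs_of_nonneg (by linarith), max_eq_left (by linarith)]
      ring

/-- `max_w [−ν‖w − g‖₂ − δ‖w‖_∞] = −min_{μ≥0} [ν√(Σᵢ S_μ(gᵢ)²) + δμ]`. -/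
theorem stmt16 (m : ℕ) (ν δ : ℝ) (hν : 0 ≤ ν) (hδ : 0 ≤ δ) (g : Fin m → ℝ) :
    sSup ((fun w : Fin m → ℝ => -ν * norm2 (w - g) - δ * normInf w) '' Set.univ)
      = - sInf ((fun μ => ν * Real.sqrt (∑ i, (softT μ (g i))^2) + δ * μ) ''
          {μ : ℝ | 0 ≤ μ}) := by
  set f : (Fin m → ℝ) → ℝ := fun w => -ν * norm2 (w - g) - δ * normInf w with hf
  set h : ℝ → ℝ := fun μ => ν * Real.sqrt (∑ i, (softT μ (g i))^2) + δ * μ with hh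
  have normInf_nonneg : ∀ (w : Fin m → ℝ), 0 ≤ normInf w := fun w =>
    Real.iSup_nonneg (fun i => abs_nonneg _)
  have hSub : BddAbove (f '' Set.univ) := by
    refine ⟨0, ?_⟩
    rintro x ⟨w, -, rfl⟩
    have h1 : 0 ≤ norm2 (w - g) := Real.sqrt_nonneg _
    have h2 := normInf_nonneg w
    simp only [hf]
    nlinarith
  have hTlb : BddBelow (h '' {μ : ℝ | 0 ≤ μ}) := by
    refine ⟨0, ?_⟩
    rintro x ⟨μ, hμ, rfl⟩
    have hμ' : (0:ℝ) ≤ μ := hμ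
    have h1 : 0 ≤ Real.sqrt (∑ i, (softT μ (g i))^2) := Real.sqrt_nonneg _
    simp only [hh]
    nlinarith [mul_nonneg hν h1, mul_nonneg hδ hμ']
  have hTne : (h '' {μ : ℝ | 0 ≤ μ}).Nonempty := ⟨h 0, 0, le_refl (0:ℝ), rfl⟩
  have hSne : (f '' Set.univ).Nonempty := ⟨f 0, 0, trivial, rfl⟩
  apply le_antisymm
  · -- sup ≤ -inf
    apply csSup_le hSne
    rintro x ⟨w, -, rfl⟩
    set μ := normInf w with hμdef
    have hμ : 0 ≤ μ := normInf_nonneg w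
    have hb : ∀ i, |w i| ≤ μ := by
      intro i
      rw [hμdef, normInf]
      exact le_ciSup (f := fun j => |w j|) (Set.Finite.bddAbove (Set.finite_range _)) i
    have key : Real.sqrt (∑ i, (softT μ (g i))^2) ≤ norm2 (w - g) := by
      apply Real.sqrt_le_sqrt
      apply Finset.sum_le_sum
      intro i _
      have h1 : |softT μ (g i)| ≤ |(w - g) i| := by
        rw [abs_softT μ _ hμ, Pi.sub_apply]
        apply max_le _ (abs_nonneg _)
        calc |g i| - μ ≤ |g i| - |w i| := by linarith [hb i]
          _ ≤ |g i - w i| := abs_sub_abs_le_abs_sub _ _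
          _ = |w i - g i| := abs_sub_comm _ _
      calc (softT μ (g i))^2 = |softT μ (g i)|^2 := (sq_abs _).symm
        _ ≤ |(w - g) i|^2 := by nlinarith [abs_nonneg (softT μ (g i))]
        _ = ((w - g) i)^2 := sq_abs _
    have hinf : sInf (h '' {μ : ℝ | 0 ≤ μ}) ≤ h μ := csInf_le hTlb ⟨μ, hμ, rfl⟩
    have : f w ≤ -(h μ) := by
      simp only [hf, hh]
      nlinarith
    linarith
  · -- -inf ≤ sup, i.e. -sup ≤ inf
    rw [neg_le]
    apply le_csInf hTne
    rintro x ⟨μ, hμ, rfl⟩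
    have hμ' : (0:ℝ) ≤ μ := hμ
    rw [neg_le]
    set w : Fin m → ℝ := fun i => max (min (g i) μ) (-μ) with hw
    have hcl : ∀ i, |w i| ≤ μ := by
      intro i
      rw [abs_le]
      constructor
      · exact le_max_right _ _
      · exact max_le (min_le_right _ _) (by linarith)
    have hne : normInf w ≤ μ := Real.iSup_le hcl hμ'
    have heq : norm2 (w - g) = Real.sqrt (∑ i, (softT μ (g i))^2) := by
      rw [norm2]
      congr 1
      apply Finset.sum_congr rfl
      intro i _
      have := clamp_diff μ (g i) hμ'
      have h2 := abs_softT μ (g i) hμ'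
      have : |(w - g) i| = |softT μ (g i)| := by
        rw [Pi.sub_apply, hw]; simp only []
        rw [clamp_diff μ (g i) hμ', h2]
      calc ((w - g) i)^2 = |(w - g) i|^2 := (sq_abs _).symm
        _ = |softT μ (g i)|^2 := by rw [this]
        _ = (softT μ (g i))^2 := sq_abs _
    have hle : -(h μ) ≤ f w := by
      simp only [hf, hh, heq]
      nlinarith [normInf_nonneg w]
    have : f w ≤ sSup (f '' Set.univ) := le_csSup hSub ⟨w, trivial, rfl⟩
    linarith
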